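/- Let β, λ be positive reals with β > λ. Then Γ(β−λ)/Γ(β) ≤ e^{1/(12(β−λ))} · (β/(β−λ))^{1/2} · (β−λ)^{−λ}. -/

import Mathlib

open Real

lemma pow_mul_Gamma_le (x : ℝ) (hx : 0 < x) (n : ℕ) :
    x ^ n * Real.Gamma x ≤ Real.Gamma (x + n) := by
  induction n with
  | zero => simp
  | succ n ih =>
    have hxn : (0:ℝ) < x + n := by positivity
    have h1 : Real.Gamma (x + (n+1 : ℕ)) = (x + n) * Real.Gamma (x + n) := by
      push_cast
      rw [show (x + ((n:ℝ)+1)) = (x + n) + 1 by ring, Real.Gamma_add_one hxn.ne']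
    rw [h1]
    calc x ^ (n+1) * Real.Gamma x = x * (x ^ n * Real.Gamma x) := by ring
      _ ≤ (x + n) * (x ^ n * Real.Gamma x) := by
          apply mul_le_mul_of_nonneg_right (by linarith [Nat.cast_nonneg (α := ℝ) n])
          have := (Real.Gamma_pos_of_pos hx).le
          positivity
      _ ≤ (x + n) * Real.Gamma (x + n) := mul_le_mul_of_nonneg_left ih hxn.le

lemma gautschi (x s : ℝ) (hx : 0 < x) (hs : 0 ≤ s) (hs1 : s < 1) :
    x * Real.Gamma x ≤ Real.Gamma (x + s) * (x + s) ^ ((1:ℝ) - s) := by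
  rcases eq_or_lt_of_le hs with h0 | h0
  · rw [← h0, add_zero, sub_zero, Real.rpow_one, mul_comm]
  · have hxs : 0 < x + s := by linarith
    have hxs1 : 0 < x + s + 1 := by linarith
    have key := Real.Gamma_mul_add_mul_le_rpow_Gamma_mul_rpow_Gamma hxs hxs1 h0
      (by linarith : (0:ℝ) < 1 - s) (by ring)
    have harg : s * (x + s) + (1 - s) * (x + s + 1) = x + 1 := by ring
    rw [harg] at key
    have hG1 : Real.Gamma (x + 1) = x * Real.Gamma x := Real.Gamma_add_one hx.ne'
    have hG2 : Real.Gamma (x + s + 1) = (x + s) * Real.Gamma (x + s) :=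
      Real.Gamma_add_one hxs.ne'
    rw [hG1, hG2] at key
    have hGp : 0 < Real.Gamma (x + s) := Real.Gamma_pos_of_pos hxs
    calc x * Real.Gamma x
        ≤ Real.Gamma (x + s) ^ s * ((x + s) * Real.Gamma (x + s)) ^ ((1:ℝ) - s) := key
      _ = (Real.Gamma (x + s) ^ s * Real.Gamma (x + s) ^ ((1:ℝ) - s)) *
            (x + s) ^ ((1:ℝ) - s) := by
          rw [Real.mul_rpow hxs.le hGp.le]; ring
      _ = Real.Gamma (x + s) * (x + s) ^ ((1:ℝ) - s) := by
          rw [← Real.rpow_add hGp]; norm_num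

lemma keyK (a s lam : ℝ) (ha : 0 < a) (hs : 0 ≤ s) (hs1 : s < 1) (hsl : s ≤ lam) :
    (a + s) ^ ((1:ℝ) - s) ≤
      Real.exp (1 / (12 * a)) * ((a + lam) / a) ^ ((1:ℝ)/2) * a ^ ((1:ℝ) - s) := by
  have hxs : 0 < a + s := by linarith
  set t : ℝ := (a + s) / a with ht
  have ht1 : 1 ≤ t := by rw [ht, le_div_iff₀ ha]; linarith
  have ht0 : 0 < t := lt_of_lt_of_le one_pos ht1
  have hdecomp : (a + s) ^ ((1:ℝ) - s) = t ^ ((1:ℝ) - s) * a ^ ((1:ℝ) - s) := by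
    rw [ht, Real.div_rpow hxs.le ha.le, div_mul_cancel₀]
    positivity
  rw [hdecomp]
  have hsplit : t ^ ((1:ℝ) - s) = t ^ ((1:ℝ)/2 - s) * t ^ ((1:ℝ)/2) := by
    rw [← Real.rpow_add ht0]; ring_nf
  have h1 : t ^ ((1:ℝ)/2 - s) ≤ Real.exp (1 / (12 * a)) := by
    rcases le_or_gt (1/2 : ℝ) s with hc | hc
    · calc t ^ ((1:ℝ)/2 - s) ≤ 1 :=
            Real.rpow_le_one_of_one_le_of_nonpos ht1 (by linarith)
        _ ≤ Real.exp (1 / (12 * a)) := by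
            rw [Real.one_le_exp_iff]; positivity
    · have hlog : Real.log t ≤ s / a := by
        have h := Real.log_le_sub_one_of_pos ht0
        have htv : t - 1 = s / a := by rw [ht]; field_simp; ring
        linarith
      have hexp : ((1:ℝ)/2 - s) * Real.log t ≤ 1 / (12 * a) := by
        have h2 : ((1:ℝ)/2 - s) * Real.log t ≤ ((1:ℝ)/2 - s) * (s / a) :=
          mul_le_mul_of_nonneg_left hlog (by linarith)
        have h3 : ((1:ℝ)/2 - s) * (s / a) ≤ 1 / (12 * a) := by
          rw [show ((1:ℝ)/2 - s) * (s / a) = (((1:ℝ)/2 - s) * s) / a by ring,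
            div_le_div_iff₀ ha (by positivity)]
          nlinarith [mul_nonneg (sq_nonneg (s - 1/4)) ha.le]
        linarith
      calc t ^ ((1:ℝ)/2 - s) = Real.exp (((1:ℝ)/2 - s) * Real.log t) := by
            rw [Real.rpow_def_of_pos ht0, mul_comm]
        _ ≤ Real.exp (1 / (12 * a)) := Real.exp_le_exp.mpr hexp
  have h2 : t ^ ((1:ℝ)/2) ≤ ((a + lam) / a) ^ ((1:ℝ)/2) := by
    apply Real.rpow_le_rpow ht0.le _ (by norm_num)
    rw [ht]
    gcongr
  calc t ^ ((1:ℝ) - s) * a ^ ((1:ℝ) - s)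
      = (t ^ ((1:ℝ)/2 - s) * t ^ ((1:ℝ)/2)) * a ^ ((1:ℝ) - s) := by rw [hsplit]
    _ ≤ (Real.exp (1 / (12 * a)) * ((a + lam) / a) ^ ((1:ℝ)/2)) * a ^ ((1:ℝ) - s) := by
        apply mul_le_mul_of_nonneg_right _ (by positivity)
        exact mul_le_mul h1 h2 (by positivity) (Real.exp_pos _).le

theorem gamma_ratio_upper (β lam : ℝ) (hlam : 0 < lam) (hβ : lam < β) :
    Real.Gamma (β - lam) / Real.Gamma β ≤
      Real.exp (1 / (12 * (β - lam))) * (β / (β - lam)) ^ ((1:ℝ)/2) * (β - lam) ^ (-lam) := by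
  set a : ℝ := β - lam with hadef
  have ha : 0 < a := by simp [hadef]; linarith
  set n : ℕ := ⌊lam⌋₊ with hn
  set s : ℝ := lam - n with hsdef
  have hs0 : 0 ≤ s := by
    have := Nat.floor_le hlam.le
    simp [hsdef]; linarith
  have hs1 : s < 1 := by
    have := Nat.lt_floor_add_one lam
    simp [hsdef]; linarith
  have hlam_eq : lam = s + n := by rw [hsdef]; ring
  have hsl : s ≤ lam := by
    have : (0:ℝ) ≤ n := Nat.cast_nonneg n
    linarith [hlam_eq]
  have has : 0 < a + s := by linarith
  have hβeq : β = (a + s) + n := by rw [hadef]; linarith [hlam_eq]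
  have hGB : 0 < Real.Gamma β := Real.Gamma_pos_of_pos (by linarith)
  have hGas : 0 < Real.Gamma (a + s) := Real.Gamma_pos_of_pos has
  -- step 1 : gautschi
  have hgau := gautschi a s ha hs0 hs1
  -- step 2 : recurrence
  have hrec : (a + s) ^ n * Real.Gamma (a + s) ≤ Real.Gamma β := by
    rw [hβeq]; exact pow_mul_Gamma_le (a + s) has n
  have hpow : a ^ n ≤ (a + s) ^ n := pow_le_pow_left₀ ha.le (by linarith) n
  have hrec2 : a ^ n * Real.Gamma (a + s) ≤ Real.Gamma β :=
    le_trans (mul_le_mul_of_nonneg_right hpow hGas.le) hrec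
  -- combine: a^(n+1) * Γ a ≤ Γ β * (a+s)^(1-s)
  have hcomb : a ^ (n+1) * Real.Gamma a ≤ Real.Gamma β * (a + s) ^ ((1:ℝ) - s) := by
    have h1 : a ^ (n+1) * Real.Gamma a = a ^ n * (a * Real.Gamma a) := by ring
    have h2 : a ^ n * (a * Real.Gamma a) ≤ a ^ n * (Real.Gamma (a + s) * (a + s) ^ ((1:ℝ) - s)) :=
      mul_le_mul_of_nonneg_left hgau (by positivity)
    have h3 : a ^ n * (Real.Gamma (a + s) * (a + s) ^ ((1:ℝ) - s))
        = (a ^ n * Real.Gamma (a + s)) * (a + s) ^ ((1:ℝ) - s) := by ring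
    rw [h1]
    calc a ^ n * (a * Real.Gamma a) ≤ (a ^ n * Real.Gamma (a + s)) * (a + s) ^ ((1:ℝ) - s) := by
          rw [← h3]; exact h2
      _ ≤ Real.Gamma β * (a + s) ^ ((1:ℝ) - s) :=
          mul_le_mul_of_nonneg_right hrec2 (by positivity)
  -- use keyK
  have hK := keyK a s lam ha hs0 hs1 hsl
  have hcomb2 : a ^ (n+1) * Real.Gamma a ≤
      Real.Gamma β * (Real.exp (1 / (12 * a)) * ((a + lam) / a) ^ ((1:ℝ)/2) * a ^ ((1:ℝ) - s)) :=
    le_trans hcomb (mul_le_mul_of_nonneg_left hK hGB.le)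
  -- final algebra
  have halam : a + lam = β := by rw [hadef]; ring
  rw [halam] at hcomb2
  rw [div_le_iff₀ hGB]
  -- goal: Γ a ≤ E * (β/a)^(1/2) * a^(-lam) * Γ β
  have hpowid : a ^ ((1:ℝ) - s) / a ^ (n+1) = a ^ (-lam) := by
    rw [← Real.rpow_natCast a (n+1), ← Real.rpow_sub ha]
    congr 1
    push_cast
    rw [hlam_eq]; ring
  have han1 : (0:ℝ) < a ^ (n+1) := by positivity
  rw [← mul_le_mul_iff_of_pos_right han1]
  have hsplitpow : a ^ ((1:ℝ) - s) = a ^ (-lam) * a ^ (n+1) := by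
    rw [← hpowid]; field_simp
  calc Real.Gamma a * a ^ (n+1)
      = a ^ (n+1) * Real.Gamma a := by ring
    _ ≤ Real.Gamma β * (Real.exp (1 / (12 * a)) * (β / a) ^ ((1:ℝ)/2) * a ^ ((1:ℝ) - s)) :=
        hcomb2
    _ = Real.exp (1 / (12 * a)) * (β / a) ^ ((1:ℝ)/2) * a ^ (-lam) * Real.Gamma β *
          a ^ (n+1) := by rw [hsplitpow]; ring
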